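/- Let U be a ρ × ρ matrix over K[x] all of whose rows are nonzero and which is in weak Popov form. Then for every nonzero vector b in the K[x]-row space of U, the row u of U with LP(u) = LP(b) satisfies deg u ≤ deg b. -/

import Mathlib

open Polynomial

/-- The degree of a vector of polynomials: the maximum of the degrees of its entries. -/
noncomputable def vdeg {K : Type} [Field K] {ρ : ℕ} (v : Fin ρ → K[X]) : WithBot ℕ :=
  Finset.univ.sup fun i => (v i).degree

/-- The leading position of a vector of polynomials: the largest index attaining the
maximal degree. -/
noncomputable def LP {K : Type} [Field K] {ρ : ℕ} [NeZero ρ] (v : Fin ρ → K[X]) : Fin ρ :=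
  (Finset.univ.filter fun i => (v i).degree = vdeg v).max' (by
    obtain ⟨b, -, hb⟩ := Finset.exists_mem_eq_sup (Finset.univ : Finset (Fin ρ))
      Finset.univ_nonempty fun i => (v i).degree
    exact ⟨b, Finset.mem_filter.mpr ⟨Finset.mem_univ b, hb.symm⟩⟩)

/-- Let `U` be a `ρ × ρ` matrix over `K[x]` all of whose rows are nonzero and which is in
weak Popov form (the leading positions of its rows are pairwise distinct). Then for every
nonzero vector `b` in the `K[x]`-row space of `U`, the row `u` of `U` with `LP u = LP b`
satisfies `deg u ≤ deg b`. -/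
lemma vdeg_apply_le {K : Type} [Field K] {ρ : ℕ} (v : Fin ρ → K[X]) (q : Fin ρ) :
    (v q).degree ≤ vdeg v := by unfold vdeg; exact Finset.le_sup (f := fun i => (v i).degree) (Finset.mem_univ q)

lemma LP_mem {K : Type} [Field K] {ρ : ℕ} [NeZero ρ] (v : Fin ρ → K[X]) :
    LP v ∈ Finset.univ.filter fun i => (v i).degree = vdeg v := by
  unfold LP; exact Finset.max'_mem _ _

lemma deg_LP {K : Type} [Field K] {ρ : ℕ} [NeZero ρ] (v : Fin ρ → K[X]) :
    (v (LP v)).degree = vdeg v := (Finset.mem_filter.mp (LP_mem v)).2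

lemma le_LP {K : Type} [Field K] {ρ : ℕ} [NeZero ρ] (v : Fin ρ → K[X]) (q : Fin ρ)
    (h : (v q).degree = vdeg v) : q ≤ LP v := by
  unfold LP; exact Finset.le_max' _ _ (Finset.mem_filter.mpr ⟨Finset.mem_univ q, h⟩)

lemma deg_lt_of_LP_lt {K : Type} [Field K] {ρ : ℕ} [NeZero ρ] (v : Fin ρ → K[X]) (q : Fin ρ)
    (h : LP v < q) : (v q).degree < vdeg v := by
  refine lt_of_le_of_ne (vdeg_apply_le v q) fun he => absurd (le_LP v q he) (not_le.mpr h)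

theorem stmt_4 {K : Type} [Field K] {ρ : ℕ} [NeZero ρ]
    (U : Matrix (Fin ρ) (Fin ρ) K[X])
    (hrows : ∀ i, U i ≠ 0)
    (hwpf : Function.Injective fun i => LP (U i))
    (b : Fin ρ → K[X]) (hb : b ≠ 0)
    (hmem : b ∈ Submodule.span K[X] (Set.range fun i => U i))
    (i : Fin ρ) (hLP : LP (U i) = LP b) :
    vdeg (U i) ≤ vdeg b := by
  classical
  obtain ⟨c, hc⟩ := (Submodule.mem_span_range_iff_exists_fun K[X]).mp hmem
  -- the support of c
  set S : Finset (Fin ρ) := Finset.univ.filter fun j => c j ≠ 0 with hS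
  have hSne : S.Nonempty := by
    by_contra h
    apply hb
    have : ∀ j, c j = 0 := by
      intro j
      by_contra hj
      exact h ⟨j, Finset.mem_filter.mpr ⟨Finset.mem_univ j, hj⟩⟩
    funext q
    rw [← hc]
    simp [this]
  set d : Fin ρ → WithBot ℕ := fun j => (c j).degree + vdeg (U j) with hd
  set D : WithBot ℕ := S.sup d with hDdef
  set T : Finset (Fin ρ) := S.filter (fun j => d j = D) with hTsub
  have hTne : T.Nonempty := by
    obtain ⟨j, hjS, hj⟩ := Finset.exists_mem_eq_sup S hSne d
    exact ⟨j, Finset.mem_filter.mpr ⟨hjS, hj.symm⟩⟩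
  obtain ⟨j₀, hj₀T, hj₀max⟩ := Finset.exists_max_image T (fun j => LP (U j)) hTne
  have hj₀S : j₀ ∈ S := (Finset.mem_filter.mp hj₀T).1
  have hj₀D : d j₀ = D := (Finset.mem_filter.mp hj₀T).2
  have hcj₀ : c j₀ ≠ 0 := (Finset.mem_filter.mp hj₀S).2
  have hUj₀ : vdeg (U j₀) ≠ ⊥ := by
    obtain ⟨q, hq⟩ := Function.ne_iff.mp (hrows j₀)
    intro h
    have := vdeg_apply_le (U j₀) q
    rw [h, le_bot_iff, degree_eq_bot] at this
    exact hq this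
  have hDbot : D ≠ ⊥ := by
    rw [← hj₀D]
    intro h
    rcases WithBot.add_eq_bot.mp (by exact h) with h | h
    · exact hcj₀ (degree_eq_bot.mp h)
    · exact hUj₀ h
  set p : Fin ρ := LP (U j₀) with hp
  -- bound on each term
  have hterm_le : ∀ (j : Fin ρ) (q : Fin ρ), (c j * U j q).degree ≤ D := by
    intro j q
    rcases eq_or_ne (c j) 0 with h0 | h0
    · simp [h0, bot_le]
    · calc (c j * U j q).degree ≤ (c j).degree + (U j q).degree := degree_mul_le _ _
        _ ≤ (c j).degree + vdeg (U j) := add_le_add_right (vdeg_apply_le _ _) _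
        _ = d j := rfl
        _ ≤ D := Finset.le_sup (Finset.mem_filter.mpr ⟨Finset.mem_univ j, h0⟩)
  -- strict bound for positions beyond or equal p with j ≠ j₀
  have hterm_lt : ∀ (j : Fin ρ) (q : Fin ρ), p ≤ q → (j ≠ j₀ ∨ p < q) → (c j * U j q).degree < D := by
    intro j q hpq hcase
    rcases eq_or_ne (c j) 0 with h0 | h0
    · simpa [h0] using Ne.bot_lt hDbot
    have hjS : j ∈ S := Finset.mem_filter.mpr ⟨Finset.mem_univ j, h0⟩
    rcases lt_or_eq_of_le (Finset.le_sup hjS : d j ≤ D) with hlt | heq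
    · calc (c j * U j q).degree ≤ (c j).degree + (U j q).degree := degree_mul_le _ _
        _ ≤ (c j).degree + vdeg (U j) := add_le_add_right (vdeg_apply_le _ _) _
        _ = d j := rfl
        _ < D := hlt
    · -- d j = D, so LP (U j) ≤ p; show LP (U j) < q
      have hjT : j ∈ T := Finset.mem_filter.mpr ⟨hjS, heq⟩
      have hLPle : LP (U j) ≤ p := hj₀max j hjT
      have hLPlt : LP (U j) < q := by
        rcases hcase with hne | hlt
        · rcases lt_or_eq_of_le hLPle with h | h
          · exact lt_of_lt_of_le h hpq
          · exact absurd (hwpf h) hne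
        · exact lt_of_le_of_lt hLPle hlt
      calc (c j * U j q).degree ≤ (c j).degree + (U j q).degree := degree_mul_le _ _
        _ < (c j).degree + vdeg (U j) :=
            WithBot.add_lt_add_left (degree_eq_bot.not.mpr h0) (deg_lt_of_LP_lt _ _ hLPlt)
        _ = d j := rfl
        _ = D := heq
  have hbq : ∀ q, b q = ∑ j, c j * U j q := by
    intro q
    rw [← hc]
    simp [Finset.sum_apply]
  -- deg (b q) ≤ D for all q
  have hble : ∀ q, (b q).degree ≤ D := by
    intro q
    rw [hbq]
    refine le_trans (degree_sum_le _ _) (Finset.sup_le fun j _ => hterm_le j q)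
  -- deg (b p) = D
  have hbp : (b p).degree = D := by
    rw [hbq]
    rw [← Finset.add_sum_erase _ _ (Finset.mem_univ j₀)]
    have hmain : (c j₀ * U j₀ p).degree = D := by
      rw [degree_mul, deg_LP, hj₀D.symm]
    have hrest : (∑ j ∈ Finset.univ.erase j₀, c j * U j p).degree < D := by
      refine lt_of_le_of_lt (degree_sum_le _ _) ?_
      rw [Finset.sup_lt_iff (Ne.bot_lt hDbot)]
      intro j hj
      exact hterm_lt j p le_rfl (Or.inl (Finset.ne_of_mem_erase hj))
    rw [← hmain] at hrest ⊢
    exact degree_add_eq_left_of_degree_lt hrest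
  -- deg (b q) < D for q > p
  have hblt : ∀ q, p < q → (b q).degree < D := by
    intro q hq
    rw [hbq]
    refine lt_of_le_of_lt (degree_sum_le _ _) ?_
    rw [Finset.sup_lt_iff (Ne.bot_lt hDbot)]
    intro j _
    exact hterm_lt j q hq.le (Or.inr hq)
  -- vdeg b = D
  have hvb : vdeg b = D := by
    refine le_antisymm (Finset.sup_le fun q _ => hble q) ?_
    rw [← hbp]
    exact vdeg_apply_le b p
  -- LP b = p
  have hLPb : LP b = p := by
    have h1 : p ≤ LP b := le_LP b p (by rw [hbp, hvb])
    rcases lt_or_eq_of_le h1 with h | h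
    · exact absurd (deg_LP b) (by rw [hvb]; exact (hblt _ h).ne)
    · exact h.symm
  have hij : i = j₀ := hwpf (show LP (U i) = LP (U j₀) by rw [hLP, hLPb, hp])
  rw [hij, hvb, ← hj₀D, hd]
  calc vdeg (U j₀) = 0 + vdeg (U j₀) := (zero_add _).symm
    _ ≤ (c j₀).degree + vdeg (U j₀) :=
      add_le_add_left (zero_le_degree_iff.mpr hcj₀) _
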